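/- Let a, c > 0, λ₁ ∈ ℝ, and let φ₁ : ℝ → ℝ be twice continuously differentiable, strictly positive on [α,β], satisfying −c φ₁''(x) − a σ(x) φ₁(x) = λ₁ φ₁(x) for all x ∈ [α,β] with φ₁'(α) = φ₁'(β) = 0. Then: (i) λ₁ = −a (∫_α^β σ(x) φ₁(x) dx) / (∫_α^β φ₁(x) dx); and (ii) the normalized function u := μ φ₁ with μ := (∫_α^β φ₁(y) dy)^{−1} is a stationary solution of the replicator–mutator equation, i.e., c u''(x) + a (σ(x) − ∫_α^β σ(y) u(y) dy) u(x) = 0 for all x ∈ [α,β], with u'(α) = u'(β) = 0 and ∫_α^β u(x) dx = 1. -/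

import Mathlib

open MeasureTheory Set

/-- For a positive principal Neumann eigenpair `(λ₁, φ₁)` of `L = −cΔ − aσ` on `[α,β]`:
(i) `λ₁ = −a (∫ σ φ₁)/(∫ φ₁)`; and (ii) the normalized eigenfunction `u = μ φ₁` with
`μ = (∫ φ₁)⁻¹` is a stationary solution of the replicator–mutator equation with Neumann
boundary conditions and total mass one. -/
theorem principal_eigenfunction_stationary_solution
    (α β a c : ℝ) (hαβ : α < β) (ha : 0 < a) (hc : 0 < c)
    (σ : ℝ → ℝ) (hσ : Continuous σ)
    (lam : ℝ) (φ : ℝ → ℝ) (hφ : ContDiff ℝ 2 φ)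
    (hpos : ∀ x ∈ Icc α β, 0 < φ x)
    (heig : ∀ x ∈ Icc α β, -c * deriv (deriv φ) x - a * σ x * φ x = lam * φ x)
    (hbcα : deriv φ α = 0) (hbcβ : deriv φ β = 0) :
    lam = -a * (∫ x in α..β, σ x * φ x) / ∫ x in α..β, φ x ∧
    (∀ x ∈ Icc α β,
      c * deriv (deriv (fun y => (∫ z in α..β, φ z)⁻¹ * φ y)) x +
        a * (σ x - ∫ y in α..β, σ y * ((∫ z in α..β, φ z)⁻¹ * φ y)) *
          ((∫ z in α..β, φ z)⁻¹ * φ x) = 0) ∧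
    deriv (fun y => (∫ z in α..β, φ z)⁻¹ * φ y) α = 0 ∧
    deriv (fun y => (∫ z in α..β, φ z)⁻¹ * φ y) β = 0 ∧
    (∫ x in α..β, (∫ z in α..β, φ z)⁻¹ * φ x) = 1 := by
  set I : ℝ := ∫ z in α..β, φ z with hIdef
  set S : ℝ := ∫ x in α..β, σ x * φ x with hSdef
  have hφcont : Continuous φ := hφ.continuous
  have hle : α ≤ β := hαβ.le
  -- derivatives
  have hd1 : Differentiable ℝ φ := hφ.differentiable (by norm_num)
  have hcd1 : ContDiff ℝ 1 (deriv φ) := by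
    have := (contDiff_succ_iff_deriv (n := 1)).mp (by exact_mod_cast hφ)
    exact this.2.2
  have hd2 : Differentiable ℝ (deriv φ) := hcd1.differentiable (by norm_num)
  have hc2 : Continuous (deriv (deriv φ)) := hcd1.continuous_deriv le_rfl
  -- positivity of I
  have hI : 0 < I := by
    apply intervalIntegral.intervalIntegral_pos_of_pos_on
      (hφcont.intervalIntegrable α β)
      (fun x hx => hpos x ⟨hx.1.le, hx.2.le⟩) hαβ
  have hIne : I ≠ 0 := hI.ne'
  -- integrate the eigenequation
  have hFTC : (∫ x in α..β, deriv (deriv φ) x) = 0 := by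
    rw [intervalIntegral.integral_deriv_eq_sub (fun x _ => hd2 x)
      (hc2.intervalIntegrable α β), hbcα, hbcβ, sub_zero]
  have hkey : lam * I = -a * S := by
    have h1 : (∫ x in α..β, lam * φ x)
        = ∫ x in α..β, (-c * deriv (deriv φ) x - a * σ x * φ x) := by
      apply intervalIntegral.integral_congr
      intro x hx
      rw [uIcc_of_le hle] at hx
      exact (heig x hx).symm
    have h2 : (∫ x in α..β, lam * φ x) = lam * I := by
      rw [intervalIntegral.integral_const_mul]
    have h3 : (∫ x in α..β, (-c * deriv (deriv φ) x - a * σ x * φ x))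
        = -c * (∫ x in α..β, deriv (deriv φ) x) - a * S := by
      have hh : (fun x => -c * deriv (deriv φ) x - a * σ x * φ x)
          = fun x => -c * deriv (deriv φ) x - a * (σ x * φ x) := by
        funext x; ring
      rw [hh, intervalIntegral.integral_sub (f := fun x => -c * deriv (deriv φ) x) (g := fun x => a * (σ x * φ x))
        ((continuous_const.mul hc2).intervalIntegrable α β)
        ((continuous_const.mul (hσ.mul hφcont)).intervalIntegrable α β),
        intervalIntegral.integral_const_mul, hSdef,
        intervalIntegral.integral_const_mul]
    rw [h2, h3, hFTC] at h1
    linarith [h1]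
  have hlam : lam = -a * S / I := by
    field_simp
    linarith [hkey]
  -- derivatives of the normalized function
  have hD1 : deriv (fun y => I⁻¹ * φ y) = fun y => I⁻¹ * deriv φ y :=
    funext fun y => deriv_const_mul_field _
  have hD2 : ∀ x, deriv (deriv (fun y => I⁻¹ * φ y)) x = I⁻¹ * deriv (deriv φ) x := by
    intro x
    rw [hD1]
    exact deriv_const_mul_field _
  -- inner mass integral
  have hMass : (∫ y in α..β, σ y * (I⁻¹ * φ y)) = I⁻¹ * S := by
    have : (fun y => σ y * (I⁻¹ * φ y)) = fun y => I⁻¹ * (σ y * φ y) := by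
      funext y; ring
    rw [this, intervalIntegral.integral_const_mul]
  refine ⟨hlam, ?_, ?_, ?_, ?_⟩
  · intro x hx
    rw [hD2, hMass]
    have he := heig x hx
    have : c * deriv (deriv φ) x = -a * σ x * φ x - lam * φ x := by linarith
    rw [hlam] at this
    field_simp at this ⊢
    nlinarith [this]
  · rw [hD1]; simp [hbcα]
  · rw [hD1]; simp [hbcβ]
  · rw [intervalIntegral.integral_const_mul, ← hIdef, inv_mul_cancel₀ hIne]
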